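/- Let μ be a finite Borel measure on 𝕋^d with I_α(μ) < ∞ and Fourier decay |μ̂(ξ)| ≤ C_F (1+|ξ|)^{−β/2} for all ξ ∈ ℤ^d, where β > 0. Then μ̂ ∈ ℓ^q(ℤ^d) for q = 2(β + d − α)/β, with ‖μ̂‖_{ℓ^q}^q ≤ I_α(μ) · C_F^{q−2}. -/

import Mathlib

open MeasureTheory

/-- Fourier coefficient `μ̂(ξ) = ∫ e^{−2πi ξ·x} dμ(x)` of a measure on the `d`-torus. -/
noncomputable def torusFourier {d : ℕ} (μ : Measure (Fin d → AddCircle (1:ℝ)))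
    (ξ : Fin d → ℤ) : ℂ :=
  ∫ x, (∏ i, (fourier (-(ξ i)) (x i) : ℂ)) ∂μ

/-- Euclidean norm of a lattice point `ξ ∈ ℤ^d`. -/
noncomputable def zNorm {d : ℕ} (ξ : Fin d → ℤ) : ℝ := Real.sqrt (∑ i, ((ξ i : ℝ)) ^ 2)

/-- If `μ` is a finite measure on `𝕋^d` with `I_α(μ) < ∞` and Fourier
decay `|μ̂(ξ)| ≤ C_F(1+|ξ|)^{−β/2}`, then `μ̂ ∈ ℓ^q` for `q = 2(β+d−α)/β`, with
`‖μ̂‖_{ℓ^q}^q ≤ I_α(μ) C_F^{q−2}`. -/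
theorem stmt4 {d : ℕ} (hd : 0 < d)
    (μ : Measure (Fin d → AddCircle (1:ℝ))) [IsFiniteMeasure μ]
    (α β C_F : ℝ) (hα : 0 < α) (hαd : α < d) (hβ : 0 < β) (hCF : 0 < C_F)
    (hI : Summable fun ξ : Fin d → ℤ =>
      ‖torusFourier μ ξ‖ ^ 2 * (1 + zNorm ξ) ^ (-((d : ℝ) - α)))
    (hdecay : ∀ ξ : Fin d → ℤ, ‖torusFourier μ ξ‖ ≤ C_F * (1 + zNorm ξ) ^ (-(β / 2))) :
    Summable (fun ξ : Fin d → ℤ => ‖torusFourier μ ξ‖ ^ (2 * (β + (d : ℝ) - α) / β)) ∧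
    ∑' ξ : Fin d → ℤ, ‖torusFourier μ ξ‖ ^ (2 * (β + (d : ℝ) - α) / β)
      ≤ (∑' ξ : Fin d → ℤ, ‖torusFourier μ ξ‖ ^ 2 * (1 + zNorm ξ) ^ (-((d : ℝ) - α)))
        * C_F ^ (2 * (β + (d : ℝ) - α) / β - 2) := by
  have hda : 0 < (d:ℝ) - α := by
    have : (α:ℝ) < d := hαd
    linarith
  set q : ℝ := 2 * (β + (d : ℝ) - α) / β with hq
  have hq2 : q - 2 = 2 * ((d:ℝ) - α) / β := by
    rw [hq]; field_simp; ring
  have hq2pos : 0 ≤ q - 2 := by rw [hq2]; positivity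
  have hqpos : 0 < q := by linarith
  have hexp : -(β / 2) * (q - 2) = -((d:ℝ) - α) := by
    rw [hq2]; field_simp
  have key : ∀ ξ : Fin d → ℤ, ‖torusFourier μ ξ‖ ^ q ≤
      (‖torusFourier μ ξ‖ ^ 2 * (1 + zNorm ξ) ^ (-((d : ℝ) - α))) * C_F ^ (q - 2) := by
    intro ξ
    set a : ℝ := ‖torusFourier μ ξ‖ with ha
    set b : ℝ := 1 + zNorm ξ with hb
    have hb1 : (1:ℝ) ≤ b := by
      have : 0 ≤ zNorm ξ := Real.sqrt_nonneg _
      simp [hb]; linarith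
    have hbpos : 0 < b := lt_of_lt_of_le one_pos hb1
    have hanneg : 0 ≤ a := norm_nonneg _
    rcases eq_or_lt_of_le hanneg with h0 | hapos
    · rw [← h0, Real.zero_rpow (ne_of_gt hqpos)]
      positivity
    · have step1 : a ^ q = a ^ (2:ℕ) * a ^ (q - 2) := by
        rw [← Real.rpow_natCast a 2, ← Real.rpow_add hapos]
        norm_num
      have step2 : a ^ (q - 2) ≤ (C_F * b ^ (-(β / 2))) ^ (q - 2) :=
        Real.rpow_le_rpow hanneg (hdecay ξ) hq2pos
      have step3 : (C_F * b ^ (-(β / 2))) ^ (q - 2)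
          = C_F ^ (q - 2) * b ^ (-((d:ℝ) - α)) := by
        rw [Real.mul_rpow (le_of_lt hCF) (Real.rpow_nonneg (le_of_lt hbpos) _),
          ← Real.rpow_mul (le_of_lt hbpos), hexp]
      calc a ^ q = a ^ (2:ℕ) * a ^ (q - 2) := step1
        _ ≤ a ^ (2:ℕ) * (C_F ^ (q - 2) * b ^ (-((d:ℝ) - α))) := by
            rw [← step3]
            exact mul_le_mul_of_nonneg_left step2 (by positivity)
        _ = (a ^ 2 * b ^ (-((d:ℝ) - α))) * C_F ^ (q - 2) := by ring
  have hsum : Summable (fun ξ : Fin d → ℤ => ‖torusFourier μ ξ‖ ^ q) :=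
    Summable.of_nonneg_of_le (fun ξ => Real.rpow_nonneg (norm_nonneg _) _) key
      (hI.mul_right _)
  refine ⟨hsum, ?_⟩
  calc ∑' ξ : Fin d → ℤ, ‖torusFourier μ ξ‖ ^ q
      ≤ ∑' ξ : Fin d → ℤ, (‖torusFourier μ ξ‖ ^ 2 * (1 + zNorm ξ) ^ (-((d : ℝ) - α)))
          * C_F ^ (q - 2) := Summable.tsum_le_tsum key hsum (hI.mul_right _)
    _ = (∑' ξ : Fin d → ℤ, ‖torusFourier μ ξ‖ ^ 2 * (1 + zNorm ξ) ^ (-((d : ℝ) - α)))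
          * C_F ^ (q - 2) := tsum_mul_right
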